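/- Let 𝒜 and ℬ be abelian categories and let i : ℬ → 𝒜 and e : 𝒜 → ℬ be exact functors with a natural isomorphism e ∘ i ≅ Id_ℬ. Then dim ℬ ≤ dim 𝒜. -/
import Mathlib


open CategoryTheory Limits

attribute [local instance] CategoryTheory.Limits.HasFiniteBiproducts.of_hasFiniteProducts

noncomputable section

universe v u v' u'

/-- `add 𝒰`: the class of direct summands of finite direct sums of objects of `𝒰`. -/
def addClosure {C : Type u} [Category.{v} C] [Abelian C] (S : Set C) : Set C :=
  {X | ∃ (n : ℕ) (g : Fin n → C), (∀ k, g k ∈ S) ∧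
    ∃ (s : X ⟶ ⨁ g) (p : (⨁ g) ⟶ X), s ≫ p = 𝟙 X}

/-- The operation `𝒰₁ • 𝒰₂`. -/
def bulletOp {C : Type u} [Category.{v} C] [Abelian C] (S T : Set C) : Set C :=
  addClosure {X | ∃ (U V : C) (_ : U ∈ S) (_ : V ∈ T) (f : U ⟶ X) (g : X ⟶ V)
    (w : f ≫ g = 0), (ShortComplex.mk f g w).ShortExact}

/-- `[T]_n`. -/
def bracket {C : Type u} [Category.{v} C] [Abelian C] (T : C) : ℕ → Set C
  | 0 => {X | IsZero X}
  | n + 1 => bulletOp (addClosure {T}) (bracket T n)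

/-- The extension dimension of an abelian category. -/
noncomputable def extDim (C : Type u) [Category.{v} C] [Abelian C] : ℕ∞ :=
  sInf {x : ℕ∞ | ∃ m : ℕ, x = (m : ℕ∞) ∧ ∃ T : C, ∀ X : C, X ∈ bracket T (m + 1)}

/-- `addClosure` is closed under isomorphism. -/
lemma addClosure_iso_closed {C : Type u} [Category.{v} C] [Abelian C] {S : Set C}
    {X Y : C} (φ : X ≅ Y) (hY : Y ∈ addClosure S) : X ∈ addClosure S := by
  obtain ⟨n, g, hg, s, p, hsp⟩ := hY
  exact ⟨n, g, hg, φ.hom ≫ s, p ≫ φ.inv, by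
    simp only [Category.assoc]
    rw [← Category.assoc s p, hsp, Category.id_comp, Iso.hom_inv_id]⟩

/-- An exact additive functor maps `addClosure S` into `addClosure S'` provided it maps
`S` into `S'`. -/
lemma map_addClosure {C : Type u} [Category.{v} C] [Abelian C]
    {D : Type u'} [Category.{v'} D] [Abelian D]
    (F : C ⥤ D) [F.Additive] {S : Set C} {S' : Set D}
    (hS : ∀ x ∈ S, F.obj x ∈ S') {X : C} (hX : X ∈ addClosure S) :
    F.obj X ∈ addClosure S' := by
  obtain ⟨n, g, hg, s, p, hsp⟩ := hX
  refine ⟨n, F.obj ∘ g, fun k => hS _ (hg k),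
    F.map s ≫ (F.mapBiproduct g).hom, (F.mapBiproduct g).inv ≫ F.map p, ?_⟩
  rw [Category.assoc, ← Category.assoc (F.mapBiproduct g).hom, Iso.hom_inv_id,
    Category.id_comp, ← F.map_comp, hsp, F.map_id]

/-- An exact additive functor maps `bracket T n` into `bracket (F T) n`. -/
lemma map_bracket {C : Type u} [Category.{v} C] [Abelian C]
    {D : Type u'} [Category.{v'} D] [Abelian D]
    (F : C ⥤ D) [F.Additive] [PreservesFiniteLimits F] [PreservesFiniteColimits F]
    (T : C) : ∀ (n : ℕ) (X : C), X ∈ bracket T n → F.obj X ∈ bracket (F.obj T) n := by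
  intro n
  induction n with
  | zero =>
    intro X hX
    exact F.map_isZero hX
  | succ n ih =>
    intro X hX
    refine map_addClosure F ?_ hX
    rintro M ⟨U, V, hU, hV, f, g, w, hse⟩
    refine ⟨F.obj U, F.obj V, ?_, ih V hV, F.map f, F.map g,
      by rw [← F.map_comp, w, F.map_zero], ?_⟩
    · exact map_addClosure F (fun x hx => by rw [Set.mem_singleton_iff] at hx; subst hx; rfl) hU
    · exact hse.map_of_exact F

/-- Let `𝒜` and `ℬ` be abelian categories and `i : ℬ ⥤ 𝒜`, `e : 𝒜 ⥤ ℬ`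
exact functors with a natural isomorphism `e ∘ i ≅ Id_ℬ`.  Then `dim ℬ ≤ dim 𝒜`. -/
theorem extDim_le_of_retract
    {𝒜 : Type u} [Category.{v} 𝒜] [Abelian 𝒜]
    {ℬ : Type u'} [Category.{v'} ℬ] [Abelian ℬ]
    (i : ℬ ⥤ 𝒜) (e : 𝒜 ⥤ ℬ)
    [i.Additive] [e.Additive]
    [PreservesFiniteLimits i] [PreservesFiniteColimits i]
    [PreservesFiniteLimits e] [PreservesFiniteColimits e]
    (η : i ⋙ e ≅ 𝟭 ℬ) :
    extDim ℬ ≤ extDim 𝒜 := by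
  apply sInf_le_sInf
  rintro x ⟨m, rfl, T, hT⟩
  refine ⟨m, rfl, e.obj T, fun X => ?_⟩
  have h1 : e.obj (i.obj X) ∈ bracket (e.obj T) (m + 1) :=
    map_bracket e T (m + 1) _ (hT (i.obj X))
  exact addClosure_iso_closed (η.symm.app X) h1
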